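/- arXiv:0707.3945 — 3 statements merged into one kernel-verified Lean document; each statement's English description precedes it below -/
import Mathlib

section
/- Let p, q, m ∈ ℕ, let A ∈ ℝ^{m×p}, G ∈ ℝ^{m×q}, b ∈ ℝ^m, and let P := {(x,y) ∈ ℝ^p × ℝ^q : Ax + Gy ≤ b componentwise}. Let V ⊆ ℝ^m be a finite set such that every v ∈ V satisfies v ≥ 0 and Gᵀv = 0, and such that every w ∈ ℝ^m with w ≥ 0 and Gᵀw = 0 is a nonnegative linear combination of elements of V. Then the projection of P onto the x-variables satisfies proj_X(P) = {x ∈ ℝ^p : v·(Ax) ≤ v·b for all v ∈ V}. -/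
open Set

noncomputable section

/-- Projection onto the space of integer variables. -/
def projX {p q : ℕ} (S : Set ((Fin p → ℝ) × (Fin q → ℝ))) : Set (Fin p → ℝ) :=
  {x | ∃ y, (x, y) ∈ S}


/-- Carathéodory for cones. -/
lemma cone_cara {ι : Type*} [Fintype ι] {E : Type*} [AddCommGroup E] [Module ℝ E]
    (g : ι → E) :
    ∀ (k : ℕ) (lam : ι → ℝ), (Finset.univ.filter fun i => lam i ≠ 0).card ≤ k →
      (∀ i, 0 ≤ lam i) →
      ∃ μ : ι → ℝ, (∀ i, 0 ≤ μ i) ∧ (∑ i, μ i • g i = ∑ i, lam i • g i) ∧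
        LinearIndependent ℝ (fun i : {i // μ i ≠ 0} => g i) := by
  classical
  intro k
  induction k with
  | zero =>
    intro lam hcard _
    have hz : ∀ i, lam i = 0 := by
      intro i
      by_contra h
      have hmem : i ∈ Finset.univ.filter fun i => lam i ≠ 0 := by simp [h]
      have := Finset.card_pos.mpr ⟨i, hmem⟩
      omega
    refine ⟨lam, fun i => (hz i).ge, rfl, ?_⟩
    haveI : IsEmpty {i // lam i ≠ 0} := ⟨fun x => x.2 (hz x.1)⟩
    exact linearIndependent_empty_type
  | succ k ih =>
    intro lam hcard hpos
    by_cases hli : LinearIndependent ℝ (fun i : {i // lam i ≠ 0} => g i)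
    · exact ⟨lam, hpos, rfl, hli⟩
    have key : ∀ D : ι → ℝ, (∀ i, lam i = 0 → D i = 0) → (∑ i, D i • g i = 0) →
        (∃ i, 0 < D i) →
        ∃ μ : ι → ℝ, (∀ i, 0 ≤ μ i) ∧ (∑ i, μ i • g i = ∑ i, lam i • g i) ∧
          LinearIndependent ℝ (fun i : {i // μ i ≠ 0} => g i) := by
      rintro D hsupp hDsum ⟨i1, hi1⟩
      set s : Finset ι := Finset.univ.filter fun i => 0 < D i with hs
      have hsne : s.Nonempty := ⟨i1, by simp [hs, hi1]⟩
      set t := s.inf' hsne (fun i => lam i / D i) with ht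
      obtain ⟨i0, hi0s, hi0⟩ := Finset.exists_mem_eq_inf' hsne (fun i => lam i / D i)
      have hD0 : 0 < D i0 := by simpa [hs] using hi0s
      have ht0 : 0 ≤ t := by rw [ht, hi0]; exact div_nonneg (hpos i0) hD0.le
      set μ : ι → ℝ := fun i => lam i - t * D i with hμ
      have hμpos : ∀ i, 0 ≤ μ i := by
        intro i
        by_cases h : 0 < D i
        · have h1 : t ≤ lam i / D i := Finset.inf'_le _ (by simp [hs, h])
          have h2 := (le_div_iff₀ h).mp h1
          simp only [hμ]; linarith
        · push_neg at h
          have h2 : t * D i ≤ 0 := mul_nonpos_of_nonneg_of_nonpos ht0 h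
          simp only [hμ]; nlinarith [hpos i]
      have hμi0 : μ i0 = 0 := by
        have : t = lam i0 / D i0 := by rw [ht, hi0]
        simp only [hμ, this]
        field_simp
        ring
      have hlami0 : lam i0 ≠ 0 := fun h => by have := hsupp i0 h; linarith
      have hsub : (Finset.univ.filter fun i => μ i ≠ 0) ⊂ Finset.univ.filter fun i => lam i ≠ 0 := by
        rw [Finset.ssubset_iff_of_subset]
        · exact ⟨i0, by simp [hlami0], by simp [hμi0]⟩
        · intro i hi
          simp only [Finset.mem_filter, Finset.mem_univ, true_and] at hi ⊢
          intro h
          apply hi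
          simp only [hμ, h, hsupp i h]; ring
      have hcard' : (Finset.univ.filter fun i => μ i ≠ 0).card ≤ k := by
        have := Finset.card_lt_card hsub
        omega
      obtain ⟨μ', h1, h2, h3⟩ := ih μ hcard' hμpos
      refine ⟨μ', h1, ?_, h3⟩
      rw [h2]
      have : ∑ i, μ i • g i = ∑ i, lam i • g i - t • ∑ i, D i • g i := by
        rw [Finset.smul_sum, ← Finset.sum_sub_distrib]
        refine Finset.sum_congr rfl fun i _ => ?_
        simp only [hμ, sub_smul, smul_smul]
      rw [this, hDsum, smul_zero, sub_zero]
    obtain ⟨d, hd0, j, hdj⟩ := Fintype.not_linearIndependent_iff.mp hli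
    have hmain : ∀ D : ι → ℝ, (∀ i, D i = if h : lam i ≠ 0 then d ⟨i, h⟩ else 0) → True := fun _ _ => trivial
    obtain ⟨D, hD⟩ : ∃ D : ι → ℝ, ∀ i, D i = if h : lam i ≠ 0 then d ⟨i, h⟩ else 0 :=
      ⟨fun i => if h : lam i ≠ 0 then d ⟨i, h⟩ else 0, fun _ => rfl⟩
    have hDsupp : ∀ i, lam i = 0 → D i = 0 := fun i hi => by simp [hD, hi]
    have hDsum : ∑ i, D i • g i = 0 := by
      have h1 : ∑ i, D i • g i = ∑ i : {i // lam i ≠ 0}, D i • g i.val := by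
        rw [← Finset.sum_subtype (Finset.univ.filter fun i => lam i ≠ 0)
          (fun x => by simp) (fun i => D i • g i)]
        exact (Finset.sum_subset (Finset.subset_univ _) (fun x _ hx => by
          simp only [Finset.mem_filter, Finset.mem_univ, true_and, not_not] at hx
          simp [hD, hx])).symm
      rw [h1, ← hd0]
      exact Finset.sum_congr rfl fun i _ => by rw [hD i.val, dif_pos i.2]
    have hDj : D j.val = d j := by rw [hD j.val, dif_pos j.2]
    rcases lt_or_gt_of_ne hdj with hneg | hposj
    · refine key (fun i => -D i) (fun i hi => by simp [hDsupp i hi]) ?_ ⟨j.val, by show 0 < -D j.val; rw [hDj]; linarith⟩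
      simp only [neg_smul, Finset.sum_neg_distrib, hDsum, neg_zero]
    · exact key D hDsupp hDsum ⟨j.val, by rw [hDj]; exact hposj⟩


lemma sum_subtype_eq_sum {ι : Type*} [Fintype ι] {M : Type*} [AddCommMonoid M]
    (s : Finset ι) (f : ι → M) (hf : ∀ i ∉ s, f i = 0) :
    ∑ i : {x // x ∈ s}, f i.val = ∑ i : ι, f i := by
  rw [← Finset.sum_subtype s (fun x => Iff.rfl) f]
  exact Finset.sum_subset (Finset.subset_univ _) (fun x _ hx => hf x hx)

lemma isClosed_finiteCone {ι : Type*} [Fintype ι] {E : Type*} [NormedAddCommGroup E]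
    [NormedSpace ℝ E] [FiniteDimensional ℝ E] (g : ι → E) :
    IsClosed {x : E | ∃ lam : ι → ℝ, (∀ i, 0 ≤ lam i) ∧ x = ∑ i, lam i • g i} := by
  classical
  have main : {x : E | ∃ lam : ι → ℝ, (∀ i, 0 ≤ lam i) ∧ x = ∑ i, lam i • g i} =
      ⋃ s ∈ {s : Finset ι | LinearIndependent ℝ (fun i : {x // x ∈ s} => g i)},
        (fun u : {x // x ∈ s} → ℝ => ∑ i, u i • g i.val) '' {u | ∀ i, 0 ≤ u i} := by
    ext x
    simp only [mem_setOf_eq, mem_iUnion, mem_image, exists_prop]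
    constructor
    · rintro ⟨lam, hpos, rfl⟩
      obtain ⟨μ, hμpos, hsum, hli⟩ := cone_cara g _ lam le_rfl hpos
      refine ⟨Finset.univ.filter fun i => μ i ≠ 0, ?_, fun i => μ i.val,
        fun i => hμpos _, ?_⟩
      · exact (linearIndependent_equiv (Equiv.subtypeEquivRight
          (fun x => by simp))).mpr hli
      · rw [← hsum]
        exact sum_subtype_eq_sum _ (fun i => μ i • g i) (fun i hi => by
          simp only [Finset.mem_filter, Finset.mem_univ, true_and, not_not] at hi
          simp [hi])
    · rintro ⟨s, hs, u, hu, rfl⟩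
      refine ⟨fun i => if h : i ∈ s then u ⟨i, h⟩ else 0, fun i => ?_, ?_⟩
      · dsimp only; split
        · exact hu _
        · exact le_refl 0
      · have h1 := sum_subtype_eq_sum s
          (fun i => (if h : i ∈ s then u ⟨i, h⟩ else 0) • g i)
          (fun i hi => by simp [hi])
        dsimp only
        rw [← h1]
        exact (Finset.sum_congr rfl (fun i _ => by rw [dif_pos i.2])).symm
  rw [main]
  refine Set.Finite.isClosed_biUnion (Set.toFinite _) ?_
  intro s hs
  simp only [mem_setOf_eq] at hs
  set T : ({x // x ∈ s} → ℝ) →ₗ[ℝ] E :=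
    LinearMap.lsum ℝ (fun _ : {x // x ∈ s} => ℝ) ℕ
      (fun i => LinearMap.id.smulRight (g i.val)) with hT
  have hTapp : (fun u : {x // x ∈ s} → ℝ => ∑ i, u i • g i.val) = ⇑T := by
    funext u
    simp [hT, LinearMap.lsum_apply, LinearMap.sum_apply, LinearMap.comp_apply,
      LinearMap.proj_apply, LinearMap.smulRight_apply, LinearMap.id_apply]
  have hker : LinearMap.ker T = ⊥ := Fintype.linearIndependent_iff'.mp hs
  have horth : IsClosed {u : {x // x ∈ s} → ℝ | ∀ i, 0 ≤ u i} := by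
    have h2 : {u : {x // x ∈ s} → ℝ | ∀ i, 0 ≤ u i} = ⋂ i, {u | 0 ≤ u i} := by
      ext; simp
    rw [h2]
    exact isClosed_iInter fun i => isClosed_le continuous_const (continuous_apply i)
  rw [hTapp]
  exact (T.isClosedEmbedding_of_injective hker).isClosedMap _ horth


open scoped RealInnerProductSpace in
lemma farkas_cone {ι : Type*} [Fintype ι] {E : Type*} [NormedAddCommGroup E]
    [InnerProductSpace ℝ E] [FiniteDimensional ℝ E] (g : ι → E) (c : E)
    (h : ∀ w : E, (∀ i, 0 ≤ ⟪g i, w⟫) → 0 ≤ ⟪c, w⟫) :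
    ∃ lam : ι → ℝ, (∀ i, 0 ≤ lam i) ∧ c = ∑ i, lam i • g i := by
  classical
  by_contra hc
  set K : ConvexCone ℝ E :=
    { carrier := {x : E | ∃ lam : ι → ℝ, (∀ i, 0 ≤ lam i) ∧ x = ∑ i, lam i • g i}
      smul_mem' := by
        rintro r hr x ⟨lam, hl, rfl⟩
        exact ⟨fun i => r * lam i, fun i => mul_nonneg hr.le (hl i), by
          simp [Finset.smul_sum, mul_smul]⟩
      add_mem' := by
        rintro x ⟨lam, hl, rfl⟩ y ⟨lam', hl', rfl⟩
        exact ⟨fun i => lam i + lam' i, fun i => add_nonneg (hl i) (hl' i), by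
          simp [add_smul, Finset.sum_add_distrib]⟩ } with hK
  have hne : (K : Set E).Nonempty := ⟨0, ⟨0, fun i => le_refl 0, by simp⟩⟩
  have hcl : IsClosed (K : Set E) := isClosed_finiteCone g
  have hcK : c ∉ K := fun hmem => hc hmem
  obtain ⟨y, hy1, hy2⟩ : ∃ y, (∀ x ∈ (K : Set E), 0 ≤ ⟪x, y⟫) ∧ ⟪y, c⟫ < 0 := by
    let C : ProperCone ℝ E :=
      { carrier := (K : Set E)
        add_mem' := fun ha hb => K.add_mem ha hb
        zero_mem' := ⟨0, fun i => le_refl 0, by simp⟩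
        smul_mem' := by
          rintro r x ⟨lam, hl, rfl⟩
          exact ⟨fun i => (r : ℝ) * lam i, fun i => mul_nonneg r.2 (hl i), by
            simp [Finset.smul_sum, mul_smul, NNReal.smul_def]⟩
        isClosed' := hcl }
    obtain ⟨y, hy1, hy2⟩ := ProperCone.hyperplane_separation' C hcK
    exact ⟨y, hy1, by rw [real_inner_comm]; exact hy2⟩
  have hy3 : 0 ≤ ⟪c, y⟫ := by
    refine h y (fun i => hy1 _ ?_)
    exact ⟨fun k => if k = i then 1 else 0, fun k => by dsimp only; split <;> norm_num,
      by simp [ite_smul]⟩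
  rw [real_inner_comm] at hy3
  linarith


open scoped RealInnerProductSpace

/-- Projection of a polyhedron onto the `x`-variables via the generators of the cone
`{v ≥ 0 : Gᵀv = 0}` (Farkas / Fourier–Motzkin). -/
theorem projX_eq_of_cone_generators
    {p q m : ℕ} (A : Matrix (Fin m) (Fin p) ℝ) (G : Matrix (Fin m) (Fin q) ℝ) (b : Fin m → ℝ)
    (V : Finset (Fin m → ℝ))
    (hV : ∀ v ∈ V, (∀ i, 0 ≤ v i) ∧ ∀ j, (∑ i, v i * G i j) = 0)
    (hVgen : ∀ w : Fin m → ℝ, (∀ i, 0 ≤ w i) → (∀ j, (∑ i, w i * G i j) = 0) →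
      ∃ lam : (Fin m → ℝ) → ℝ, (∀ v, 0 ≤ lam v) ∧ ∀ i, w i = ∑ v ∈ V, lam v * v i) :
    projX {z : (Fin p → ℝ) × (Fin q → ℝ) |
        ∀ i : Fin m, (∑ j, A i j * z.1 j) + (∑ j, G i j * z.2 j) ≤ b i} =
      {x : Fin p → ℝ | ∀ v ∈ V, (∑ i, v i * (∑ j, A i j * x j)) ≤ ∑ i, v i * b i} := by
  classical
  ext x
  simp only [projX, mem_setOf_eq]
  constructor
  · rintro ⟨y, hy⟩ v hv
    have h0 : ∑ j, (∑ i, v i * G i j) * y j = 0 :=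
      Finset.sum_eq_zero fun j _ => by rw [(hV v hv).2 j, zero_mul]
    have hswap : ∑ i, v i * ∑ j, G i j * y j = ∑ j, (∑ i, v i * G i j) * y j := by
      simp_rw [Finset.mul_sum, Finset.sum_mul, mul_assoc]
      exact Finset.sum_comm
    calc ∑ i, v i * ∑ j, A i j * x j
        ≤ ∑ i, v i * (b i - ∑ j, G i j * y j) := by
          refine Finset.sum_le_sum fun i _ => mul_le_mul_of_nonneg_left ?_ ((hV v hv).1 i)
          have := hy i; linarith
      _ = ∑ i, v i * b i - ∑ i, v i * ∑ j, G i j * y j := by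
          simp [mul_sub, Finset.sum_sub_distrib]
      _ = ∑ i, v i * b i := by rw [hswap, h0, sub_zero]
  · intro hx
    set gg : (Fin q ⊕ Fin q) ⊕ Fin m → EuclideanSpace ℝ (Fin m) :=
      Sum.elim (Sum.elim (fun j => WithLp.toLp 2 fun i => G i j) (fun j => WithLp.toLp 2 fun i => -G i j))
        (fun i0 => EuclideanSpace.single i0 (1:ℝ)) with hgg
    set c : EuclideanSpace ℝ (Fin m) := WithLp.toLp 2 fun i => b i - ∑ j, A i j * x j with hcdef
    obtain ⟨lam, hl, hsum⟩ : ∃ lam : (Fin q ⊕ Fin q) ⊕ Fin m → ℝ, (∀ k, 0 ≤ lam k) ∧ c = ∑ k, lam k • gg k := by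
      refine farkas_cone gg c ?_
      intro w hw
      have hwpos : ∀ i, 0 ≤ w i := fun i => by
        have := hw (Sum.inr i)
        simpa [hgg, EuclideanSpace.inner_single_left] using this
      have hGw : ∀ j, ∑ i, w i * G i j = 0 := by
        intro j
        have h1 := hw (Sum.inl (Sum.inl j))
        have h2 := hw (Sum.inl (Sum.inr j))
        simp only [hgg, Sum.elim_inl, Sum.elim_inr, PiLp.inner_apply, RCLike.inner_apply,
          conj_trivial] at h1 h2
        have h4 : ∑ i, w i * -G i j = -∑ i, G i j * w i := by
          simp [mul_comm]
        have h3 : ∑ i, G i j * w i = 0 := by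
          rw [h4] at h2
          have : ∑ i, w i * G i j = ∑ i, G i j * w i := Finset.sum_congr rfl fun i _ => mul_comm _ _
          linarith
        calc ∑ i, w i * G i j = ∑ i, G i j * w i :=
              Finset.sum_congr rfl fun i _ => mul_comm _ _
          _ = 0 := h3
      obtain ⟨l, hl0, hw_eq⟩ := hVgen w hwpos hGw
      have hcw : ⟪c, w⟫ = ∑ i, c i * w i := by
        simp [PiLp.inner_apply, RCLike.inner_apply, conj_trivial, mul_comm]
      rw [hcw]
      have hEq : ∑ i, c i * w i = ∑ v ∈ V, l v * ∑ i, v i * c i := by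
        calc ∑ i, c i * w i = ∑ i, ∑ v ∈ V, l v * (v i * c i) := by
              refine Finset.sum_congr rfl fun i _ => ?_
              rw [hw_eq i, Finset.mul_sum]
              exact Finset.sum_congr rfl fun v _ => by ring
          _ = ∑ v ∈ V, ∑ i, l v * (v i * c i) := Finset.sum_comm
          _ = ∑ v ∈ V, l v * ∑ i, v i * c i := by
              refine Finset.sum_congr rfl fun v _ => (Finset.mul_sum _ _ _).symm
      rw [hEq]
      refine Finset.sum_nonneg fun v hv => mul_nonneg (hl0 v) ?_
      have hxv := hx v hv
      have hvc : ∑ i, v i * c i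
          = ∑ i, v i * b i - ∑ i, v i * (∑ j, A i j * x j) := by
        rw [← Finset.sum_sub_distrib]
        refine Finset.sum_congr rfl fun i _ => ?_
        simp only [hcdef]
        ring
      rw [hvc]; linarith
    refine ⟨fun j => lam (Sum.inl (Sum.inl j)) - lam (Sum.inl (Sum.inr j)), fun i => ?_⟩
    have hci : c i = ∑ j, lam (Sum.inl (Sum.inl j)) * G i j
        + ∑ j, lam (Sum.inl (Sum.inr j)) * (-G i j) + lam (Sum.inr i) := by
      have h5 := congrArg (fun z : EuclideanSpace ℝ (Fin m) => z i) hsum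
      simp only [] at h5
      rw [h5, WithLp.ofLp_sum, Finset.sum_apply]
      rw [Fintype.sum_sum_type, Fintype.sum_sum_type]
      simp [hgg, EuclideanSpace.single_apply, mul_ite, Finset.sum_ite_eq, add_assoc]
    have hcib : c i = b i - ∑ j, A i j * x j := by rw [hcdef]
    have hy' : (∑ j, G i j * ((fun j => lam (Sum.inl (Sum.inl j)) - lam (Sum.inl (Sum.inr j))) j))
        = ∑ j, lam (Sum.inl (Sum.inl j)) * G i j + ∑ j, lam (Sum.inl (Sum.inr j)) * (-G i j) := by
      rw [← Finset.sum_add_distrib]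
      exact Finset.sum_congr rfl fun j _ => by simp only []; ring
    have hli := hl (Sum.inr i)
    simp only [] at hy' ⊢
    rw [hy']
    rw [hcib] at hci
    linarith
end
end

section
/- Let p ∈ ℕ and let S ⊆ ℤ^p (viewed as a subset of ℝ^p) be a set such that every point of S is an extreme point of the convex hull conv(S), and such that conv(S) ∩ ℤ^p ⊆ S. Then S is finite and has at most 2^p elements. -/
open Set

noncomputable section

/-- `x` is an integral vector. -/
def IsIntVec {p : ℕ} (x : Fin p → ℝ) : Prop := ∀ j, ∃ n : ℤ, x j = (n : ℝ)

/-- A set of integer points all of which are extreme points of their convex hull, and which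
contains all integer points of that hull, has at most `2^p` elements. -/
theorem card_le_two_pow_of_extreme_integer_points
    {p : ℕ} (S : Set (Fin p → ℝ))
    (hSint : ∀ x ∈ S, IsIntVec x)
    (hSext : ∀ x ∈ S, x ∈ Set.extremePoints ℝ (convexHull ℝ S))
    (hSlat : ∀ x ∈ convexHull ℝ S, IsIntVec x → x ∈ S) :
    S.Finite ∧ S.ncard ≤ 2 ^ p := by
  classical
  set f : (Fin p → ℝ) → (Fin p → ZMod 2) := fun x j => ((⌊x j⌋ : ℤ) : ZMod 2) with hf
  have hfloor : ∀ x ∈ S, ∀ j, x j = (⌊x j⌋ : ℝ) := by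
    intro x hx j
    obtain ⟨n, hn⟩ := hSint x hx j
    rw [hn]; simp
  have hinj : Set.InjOn f S := by
    intro x hx y hy hxy
    by_contra hne
    -- midpoint
    set m : Fin p → ℝ := fun j => (1/2 : ℝ) • x j + (1/2 : ℝ) • y j with hm
    have hmint : IsIntVec m := by
      intro j
      have hj : ((⌊x j⌋ : ℤ) : ZMod 2) = ((⌊y j⌋ : ℤ) : ZMod 2) := congrFun hxy j
      have : (2 : ℤ) ∣ ⌊x j⌋ - ⌊y j⌋ := by
        have := (ZMod.intCast_eq_intCast_iff' (⌊x j⌋) (⌊y j⌋) 2).mp hj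
        omega
      have h2 : (2 : ℤ) ∣ ⌊x j⌋ + ⌊y j⌋ := by omega
      obtain ⟨k, hk⟩ := h2
      refine ⟨k, ?_⟩
      have hxj := hfloor x hx j
      have hyj := hfloor y hy j
      have : x j + y j = ((⌊x j⌋ + ⌊y j⌋ : ℤ) : ℝ) := by push_cast; rw [← hxj, ← hyj]
      rw [hk] at this
      push_cast at this
      simp only [hm, smul_eq_mul]
      linarith
    have hxh : x ∈ convexHull ℝ S := subset_convexHull ℝ S hx
    have hyh : y ∈ convexHull ℝ S := subset_convexHull ℝ S hy
    have hmseg : m ∈ openSegment ℝ x y := by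
      refine ⟨1/2, 1/2, by norm_num, by norm_num, by norm_num, ?_⟩
      funext j
      simp [hm, Pi.smul_apply, smul_eq_mul]
    have hmhull : m ∈ convexHull ℝ S := by
      have := (convex_convexHull ℝ S).openSegment_subset hxh hyh
      exact this hmseg
    have hmS : m ∈ S := hSlat m hmhull hmint
    obtain ⟨-, hext⟩ := mem_extremePoints.mp (hSext m hmS)
    obtain ⟨hxm, hym⟩ := hext x hxh y hyh hmseg
    exact hne (hxm.trans hym.symm)
  have hfin : S.Finite := by
    have : (f '' S).Finite := Set.toFinite _
    exact Set.Finite.of_finite_image this hinj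
  refine ⟨hfin, ?_⟩
  have h1 : S.ncard = (f '' S).ncard := (Set.ncard_image_of_injOn hinj).symm
  have h2 : (f '' S).ncard ≤ Nat.card (Fin p → ZMod 2) := by
    rw [← Set.ncard_univ]
    exact Set.ncard_le_ncard (Set.subset_univ _) Set.finite_univ
  have h3 : Nat.card (Fin p → ZMod 2) = 2 ^ p := by
    simp [Nat.card_eq_fintype_card]
  omega

end
end

section
/- Let n ≥ 1, and for a ∈ {−1,1}^n set π(a) := |{i ∈ {1,…,n} : a_i = 1}| − 1. Define Q := {(x,t) ∈ ℝ^n × ℝ : 0 ≤ t ≤ 2 and a·x − π(a)·t ≤ 1 for all a ∈ {−1,1}^n}. Then: (i) for every z ∈ ℤ^n, the point (z,1) is not in the topological interior of Q; and (ii) for every z ∈ {0,1}^n, the point (z,1) belongs to Q. -/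
open Set

noncomputable section

/-- The polytope `Q ⊆ ℝⁿ × ℝ` defined by `0 ≤ t ≤ 2` and `a·x − π(a)·t ≤ 1` for all sign
vectors `a ∈ {−1,1}ⁿ`, where `π(a) = |{i : aᵢ = 1}| − 1`. -/
def cubeQ (n : ℕ) : Set ((Fin n → ℝ) × ℝ) :=
  {z | 0 ≤ z.2 ∧ z.2 ≤ 2 ∧ ∀ a : Fin n → ℝ, (∀ i, a i = 1 ∨ a i = -1) →
    (∑ i, a i * z.1 i) - (((Set.ncard {i | a i = 1} : ℕ) : ℝ) - 1) * z.2 ≤ 1}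

/-- At level `t = 1` the polytope `Q` contains no integer point in its interior, yet it
contains all points `(z,1)` with `z ∈ {0,1}ⁿ`. -/
theorem cubeQ_no_interior_integer_points_at_level_one (n : ℕ) (hn : 1 ≤ n) :
    (∀ z : Fin n → ℤ, ((fun i => (z i : ℝ)), (1 : ℝ)) ∉ interior (cubeQ n)) ∧
    (∀ z : Fin n → ℝ, (∀ i, z i = 0 ∨ z i = 1) → (z, (1 : ℝ)) ∈ cubeQ n) := by
  classical
  constructor
  · intro z hz
    set a : Fin n → ℝ := fun i => if (1:ℝ) ≤ (z i : ℝ) then 1 else -1 with ha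
    have ha_sign : ∀ i, a i = 1 ∨ a i = -1 := by
      intro i; by_cases h : (1:ℝ) ≤ (z i : ℝ) <;> simp [ha, h]
    have hφ : Continuous fun s : ℝ => ((fun i => (z i : ℝ) + s * a i), (1:ℝ)) := by
      refine Continuous.prodMk ?_ continuous_const
      exact continuous_pi fun i => continuous_const.add (continuous_id.mul continuous_const)
    have hev : ∀ᶠ s in nhds (0:ℝ),
        ((fun i => (z i : ℝ) + s * a i), (1:ℝ)) ∈ interior (cubeQ n) := by
      have hc := hφ.continuousAt (x := (0:ℝ))
      refine hc.eventually_mem (isOpen_interior.mem_nhds ?_)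
      have h0 : ((fun i => (z i : ℝ) + 0 * a i), (1:ℝ))
          = ((fun i => (z i : ℝ)), (1:ℝ)) := by simp
      rw [h0]; exact hz
    rw [Metric.eventually_nhds_iff] at hev
    obtain ⟨ε, hε, hb⟩ := hev
    set s : ℝ := ε / 2 with hs
    have hs0 : 0 < s := by positivity
    have hmem : ((fun i => (z i : ℝ) + s * a i), (1:ℝ)) ∈ cubeQ n := by
      refine interior_subset (hb ?_)
      rw [Real.dist_eq, sub_zero, abs_of_pos hs0]
      rw [hs]; linarith
    obtain ⟨-, -, hineq⟩ := hmem
    have hkey := hineq a ha_sign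
    simp only at hkey
    have hsum : (∑ i, a i * ((z i : ℝ) + s * a i)) = (∑ i, a i * (z i : ℝ)) + n * s := by
      have h1 : ∀ i ∈ Finset.univ, a i * ((z i : ℝ) + s * a i) = a i * (z i:ℝ) + s := by
        intro i _
        rcases ha_sign i with h | h <;> rw [h] <;> ring
      rw [Finset.sum_congr rfl h1, Finset.sum_add_distrib, Finset.sum_const]
      simp [nsmul_eq_mul]
    have hcard : (({i | a i = 1} : Set (Fin n)).ncard : ℝ)
        = ((Finset.univ.filter fun i => (1:ℝ) ≤ (z i : ℝ)).card : ℝ) := by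
      rw [← Set.ncard_coe_finset]
      congr 2
      ext i
      simp only [Finset.coe_filter, mem_setOf_eq, Finset.mem_univ, true_and]
      constructor
      · intro h
        by_contra hc
        rw [ha] at h
        simp only [hc, if_false] at h
        norm_num at h
      · intro h; simp [ha, h]
    have hlow : ((Finset.univ.filter fun i => (1:ℝ) ≤ (z i : ℝ)).card : ℝ)
        ≤ ∑ i, a i * (z i : ℝ) := by
      rw [← Finset.sum_boole]
      apply Finset.sum_le_sum
      intro i _
      by_cases h : (1:ℝ) ≤ (z i : ℝ)
      · simp [ha, h]
      · have h1 : (z i : ℝ) < 1 := lt_of_not_ge h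
        have h2 : z i < 1 := by exact_mod_cast h1
        have h3 : (z i : ℝ) ≤ 0 := by exact_mod_cast (by omega : z i ≤ 0)
        simp only [ha, h, if_false]
        nlinarith
    have hn' : (1:ℝ) ≤ (n:ℝ) := by exact_mod_cast hn
    rw [hsum, hcard, mul_one] at hkey
    nlinarith
  · intro z hz
    refine ⟨by norm_num, by norm_num, ?_⟩
    intro a ha
    have hcard : (({i | a i = 1} : Set (Fin n)).ncard : ℝ)
        = ((Finset.univ.filter fun i => a i = 1).card : ℝ) := by
      rw [← Set.ncard_coe_finset]
      congr 2
      ext i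
      simp
    have hup : ∑ i, a i * z i ≤ ((Finset.univ.filter fun i => a i = 1).card : ℝ) := by
      rw [← Finset.sum_boole]
      apply Finset.sum_le_sum
      intro i _
      rcases ha i with h | h <;> rcases hz i with h2 | h2 <;> simp [h, h2] <;> norm_num
    simp only [hcard, mul_one]
    linarith

end
end
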